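/- In the delta-shock limit, the shock speed σ₁ = υ_l - ρ_*(p_* - p_l)/(ρ_* - ρ_l) converges to υ_r as (a, A) → (0, 0), where p_* = p(ρ_*), p_l = p(ρ_l), and ρ_* is the intermediate density. Hence σ₁ and the contact speed σ₂ = υ_r coincide in the limit. -/

import Mathlib

open Real Set Filter

theorem shock_speed_limit
    (B Γ κ ρl υl υr : ℝ) (hB : 0 < B) (hΓ : 1 ≤ Γ ∧ Γ ≤ 3) (hκ : 0 < κ ∧ κ ≤ 1)
    (hρl : 0 < ρl) (hδ : υr ≤ υl - B / ρl ^ κ)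
    (p : ℝ → ℝ → ℝ → ℝ)
    (hp : ∀ a A ρ : ℝ, p a A ρ = A * (ρ / (1 - a * ρ)) ^ Γ - B / ρ ^ κ)
    (ρs : ℝ × ℝ → ℝ)
    (hρs : ∀ q : ℝ × ℝ, 0 < q.1 → 0 < q.2 →
      ρl < ρs q ∧ ρs q < 1 / q.1 ∧ υr = -p q.1 q.2 (ρs q) + υl + p q.1 q.2 ρl)
    (hblow : Tendsto ρs (nhdsWithin (0, 0) {q : ℝ × ℝ | 0 < q.1 ∧ 0 < q.2}) atTop)
    (hAlim : Tendsto (fun q : ℝ × ℝ => q.2 * (ρs q / (1 - q.1 * ρs q)) ^ Γ)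
      (nhdsWithin (0, 0) {q : ℝ × ℝ | 0 < q.1 ∧ 0 < q.2}) (nhds (υl - υr - B / ρl ^ κ)))
    (hBlim : Tendsto (fun q : ℝ × ℝ => B / ρs q ^ κ)
      (nhdsWithin (0, 0) {q : ℝ × ℝ | 0 < q.1 ∧ 0 < q.2}) (nhds 0)) :
    Tendsto
      (fun q : ℝ × ℝ =>
        υl - ρs q * (p q.1 q.2 (ρs q) - p q.1 q.2 ρl) / (ρs q - ρl))
      (nhdsWithin (0, 0) {q : ℝ × ℝ | 0 < q.1 ∧ 0 < q.2}) (nhds υr) := by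

  have hratio : Tendsto (fun x : ℝ => x / (x - ρl)) atTop (nhds 1) := by
    have h0 : Tendsto (fun x : ℝ => ρl / (x - ρl)) atTop (nhds 0) :=
      Tendsto.div_atTop tendsto_const_nhds (tendsto_atTop_add_const_right _ _ tendsto_id)
    have h1 : Tendsto (fun x : ℝ => 1 + ρl / (x - ρl)) atTop (nhds 1) := by
      simpa using h0.const_add 1
    refine h1.congr' ?_
    filter_upwards [eventually_gt_atTop ρl] with x hx
    have hne : x - ρl ≠ 0 := by linarith
    field_simp
    ring
  have hr : Tendsto (fun q : ℝ × ℝ => ρs q / (ρs q - ρl))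
      (nhdsWithin (0, 0) {q : ℝ × ℝ | 0 < q.1 ∧ 0 < q.2}) (nhds 1) :=
    hratio.comp hblow
  have hmain : Tendsto (fun q : ℝ × ℝ => υl - (υl - υr) * (ρs q / (ρs q - ρl)))
      (nhdsWithin (0, 0) {q : ℝ × ℝ | 0 < q.1 ∧ 0 < q.2}) (nhds υr) := by
    have := (hr.const_mul (υl - υr)).const_sub υl
    simpa using this
  refine hmain.congr' ?_
  filter_upwards [self_mem_nhdsWithin, hblow.eventually (eventually_gt_atTop ρl)]
    with q hq hlt
  obtain ⟨h1, h2⟩ := hq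
  obtain ⟨_, _, heq⟩ := hρs q h1 h2
  have hps : p q.1 q.2 (ρs q) - p q.1 q.2 ρl = υl - υr := by linarith
  rw [hps]
  ring
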